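/- The ℂ-vector space S := { B ∈ Matrix (Fin 2) (Fin 2) ℂ[z] : λ • B′ + A*B − B*A = 0 } of polynomial solutions of the system λ∂_zB + [A,B] = 0 has dimension 4 over ℂ (i.e. Module.finrank ℂ S = 4) if and only if (a₁ − a₄)² + 4·a₂·a₃ = 0. (The precise form of the paper's claim in Example 5.1.11 that the homogeneous linear ODE system λ∂_zB + [A,B] = 0 admits a full system of polynomial solutions exactly when A satisfies (a₁−a₄)² + 4a₂a₃ = 0.) -/

import Mathlib

open Polynomial

/-- The matrix `A = !![a₁, a₂; a₃, a₄]`, regarded as a matrix over `ℂ[z]`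
via the constant embedding `C : ℂ → ℂ[z]`. -/
noncomputable def Amat (a₁ a₂ a₃ a₄ : ℂ) : Matrix (Fin 2) (Fin 2) (Polynomial ℂ) :=
  !![C a₁, C a₂; C a₃, C a₄]

/-- Entrywise derivative `B′` of a matrix of polynomials. -/
noncomputable def matD (B : Matrix (Fin 2) (Fin 2) (Polynomial ℂ)) :
    Matrix (Fin 2) (Fin 2) (Polynomial ℂ) :=
  B.map fun q => derivative q

noncomputable def A0 (a₁ a₂ a₃ a₄ : ℂ) : Matrix (Fin 2) (Fin 2) ℂ := !![a₁, a₂; a₃, a₄]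

noncomputable def Tc (a₁ a₂ a₃ a₄ : ℂ) : Module.End ℂ (Matrix (Fin 2) (Fin 2) ℂ) :=
  LinearMap.mulLeft ℂ (A0 a₁ a₂ a₃ a₄) - LinearMap.mulRight ℂ (A0 a₁ a₂ a₃ a₄)

lemma Tc_apply (a₁ a₂ a₃ a₄ : ℂ) (X : Matrix (Fin 2) (Fin 2) ℂ) :
    Tc a₁ a₂ a₃ a₄ X = A0 a₁ a₂ a₃ a₄ * X - X * A0 a₁ a₂ a₃ a₄ := by
  simp [Tc, LinearMap.sub_apply, LinearMap.mulLeft_apply, LinearMap.mulRight_apply]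

lemma Tc_apply' (a₁ a₂ a₃ a₄ : ℂ) (X : Matrix (Fin 2) (Fin 2) ℂ) :
    Tc a₁ a₂ a₃ a₄ X =
      !![a₂ * X 1 0 - a₃ * X 0 1, (a₁ - a₄) * X 0 1 + a₂ * (X 1 1 - X 0 0);
         a₃ * (X 0 0 - X 1 1) + (a₄ - a₁) * X 1 0, a₃ * X 0 1 - a₂ * X 1 0] := by
  rw [Tc_apply]
  ext i j
  fin_cases i <;> fin_cases j <;>
    simp [A0, Matrix.mul_apply, Matrix.vecMul, dotProduct, Fin.sum_univ_two,
      Fin.mk_zero, Fin.mk_one] <;> ring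

lemma Tcube (a₁ a₂ a₃ a₄ : ℂ) :
    (Tc a₁ a₂ a₃ a₄) ^ 3 = ((a₁ - a₄) ^ 2 + 4 * a₂ * a₃) • Tc a₁ a₂ a₃ a₄ := by
  apply LinearMap.ext; intro X
  have h3 : ((Tc a₁ a₂ a₃ a₄) ^ 3) X
      = Tc a₁ a₂ a₃ a₄ (Tc a₁ a₂ a₃ a₄ (Tc a₁ a₂ a₃ a₄ X)) := by
    simp [pow_succ, Module.End.mul_apply]
  rw [h3, LinearMap.smul_apply, Tc_apply' a₁ a₂ a₃ a₄ X, Tc_apply', Tc_apply']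
  ext i j
  fin_cases i <;> fin_cases j <;>
    simp [Matrix.smul_apply, smul_eq_mul, Fin.mk_zero, Fin.mk_one] <;> ring

lemma Tzero (a₁ a₂ a₃ a₄ : ℂ) (h : Tc a₁ a₂ a₃ a₄ = 0) :
    (a₁ - a₄) ^ 2 + 4 * a₂ * a₃ = 0 := by
  have e1 : Tc a₁ a₂ a₃ a₄ !![1,0;0,0] = 0 := by rw [h]; rfl
  have e2 : Tc a₁ a₂ a₃ a₄ !![0,1;0,0] = 0 := by rw [h]; rfl
  rw [Tc_apply'] at e1 e2
  have h2 : a₂ = 0 := by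
    have h3 := congrFun (congrFun e1 0) 1
    simpa using h3
  have h3 : a₃ = 0 := by
    have := congrFun (congrFun e1 1) 0
    simpa using this
  have h14 : a₁ - a₄ = 0 := by
    have := congrFun (congrFun e2 0) 1
    simp [h2] at this
    simpa [sub_eq_zero] using this
  rw [h2, h14]; ring

lemma T4_iff (a₁ a₂ a₃ a₄ : ℂ) :
    (Tc a₁ a₂ a₃ a₄) ^ 4 = 0 ↔ (a₁ - a₄) ^ 2 + 4 * a₂ * a₃ = 0 := by
  set Δ : ℂ := (a₁ - a₄) ^ 2 + 4 * a₂ * a₃ with hΔ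
  set T := Tc a₁ a₂ a₃ a₄ with hT
  constructor
  · intro h4
    by_contra hne
    have h5 : T ^ 5 = 0 := by
      rw [pow_succ, h4, zero_mul]
    have h5' : T ^ 5 = (Δ * Δ) • T := by
      have e : T ^ 5 = T ^ 3 * (T ^ 2) := by rw [← pow_add]
      rw [e, Tcube, ← hΔ, ← hT, smul_mul_assoc]
      have e2 : T * T ^ 2 = T ^ 3 := by rw [← pow_succ']
      rw [e2, Tcube, ← hΔ, ← hT, smul_smul]
    have hT0 : T = 0 := by
      have hz := h5'.symm.trans h5
      rcases smul_eq_zero.mp hz with h | h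
      · exact absurd (mul_self_eq_zero.mp h) hne
      · exact h
    exact hne (Tzero _ _ _ _ hT0)
  · intro h
    rw [pow_succ, Tcube, ← hΔ, h, zero_smul, zero_mul]

noncomputable def cM (n : ℕ) (B : Matrix (Fin 2) (Fin 2) (Polynomial ℂ)) :
    Matrix (Fin 2) (Fin 2) ℂ :=
  Matrix.of fun i j => (B i j).coeff n

noncomputable def cc (lam : ℂ) (n : ℕ) : ℂ := (-lam⁻¹) ^ n * ((n.factorial : ℂ))⁻¹

lemma cc_zero (lam : ℂ) : cc lam 0 = 1 := by simp [cc]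

lemma cc_ne_zero (lam : ℂ) (hlam : lam ≠ 0) (n : ℕ) : cc lam n ≠ 0 := by
  apply mul_ne_zero
  · exact pow_ne_zero _ (neg_ne_zero.mpr (inv_ne_zero hlam))
  · exact inv_ne_zero (Nat.cast_ne_zero.mpr n.factorial_ne_zero)

lemma cc_succ (lam : ℂ) (n : ℕ) :
    cc lam (n + 1) = (-(lam⁻¹ * ((n : ℂ) + 1)⁻¹)) * cc lam n := by
  simp only [cc, pow_succ, Nat.factorial_succ, Nat.cast_mul, mul_inv]
  push_cast
  ring

lemma cc_rec (lam : ℂ) (hlam : lam ≠ 0) (n : ℕ) :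
    lam * ((n : ℂ) + 1) * cc lam (n + 1) = - cc lam n := by
  rw [cc_succ]
  have hn : ((n : ℂ) + 1) ≠ 0 := by
    have : ((n : ℂ) + 1) = ((n + 1 : ℕ) : ℂ) := by push_cast; ring
    rw [this]
    exact_mod_cast Nat.succ_ne_zero n
  field_simp
  try ring

lemma coeffE (lam a₁ a₂ a₃ a₄ : ℂ) (B : Matrix (Fin 2) (Fin 2) (Polynomial ℂ)) (n : ℕ)
    (i j : Fin 2) :
    ((lam • matD B + Amat a₁ a₂ a₃ a₄ * B - B * Amat a₁ a₂ a₃ a₄) i j).coeff n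
      = lam * ((B i j).coeff (n + 1) * ((n : ℂ) + 1)) + (Tc a₁ a₂ a₃ a₄ (cM n B)) i j := by
  rw [Tc_apply]
  fin_cases i <;> fin_cases j <;>
    simp [Amat, matD, cM, A0, Matrix.mul_apply, Matrix.vecMul, dotProduct,
      Matrix.add_apply, Matrix.sub_apply, Matrix.smul_apply, Matrix.map_apply,
      Fin.sum_univ_two, coeff_derivative, coeff_C_mul, coeff_mul_C, coeff_add, coeff_sub,
      coeff_smul, smul_eq_mul, Fin.mk_zero, Fin.mk_one, Matrix.vecHead, Matrix.vecTail,
      Function.comp] <;> ring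

/-- Example 5.1.11: for `λ ≠ 0`, the `ℂ`-vector space
`S = {B : Matrix (Fin 2) (Fin 2) ℂ[z] | λ•B′ + A*B − B*A = 0}` of polynomial
solutions of `λ∂_zB + [A,B] = 0` has dimension `4` over `ℂ` if and only if
`(a₁ − a₄)² + 4a₂a₃ = 0`. -/
theorem stmt_7 (lam a₁ a₂ a₃ a₄ : ℂ) (hlam : lam ≠ 0)
    (S : Submodule ℂ (Matrix (Fin 2) (Fin 2) (Polynomial ℂ)))
    (hS : ∀ B : Matrix (Fin 2) (Fin 2) (Polynomial ℂ),
      B ∈ S ↔ lam • matD B + Amat a₁ a₂ a₃ a₄ * B - B * Amat a₁ a₂ a₃ a₄ = 0) :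
    Module.finrank ℂ S = 4 ↔ (a₁ - a₄) ^ 2 + 4 * a₂ * a₃ = 0 := by
  classical
  have hiff : ∀ B : Matrix (Fin 2) (Fin 2) (Polynomial ℂ),
      B ∈ S ↔ ∀ (n : ℕ) (i j : Fin 2),
        lam * ((B i j).coeff (n + 1) * ((n : ℂ) + 1))
          + (Tc a₁ a₂ a₃ a₄ (cM n B)) i j = 0 := by
    intro B
    rw [hS]
    constructor
    · intro h n i j
      rw [← coeffE lam a₁ a₂ a₃ a₄ B n i j, h]
      simp
    · intro h
      ext i j n
      simp only [Matrix.zero_apply, coeff_zero]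
      rw [coeffE lam a₁ a₂ a₃ a₄ B n i j]
      exact h n i j
  have hrec : ∀ B ∈ S, ∀ n : ℕ,
      cM (n + 1) B = (-(lam⁻¹ * ((n : ℂ) + 1)⁻¹)) • Tc a₁ a₂ a₃ a₄ (cM n B) := by
    intro B hB n
    have h := (hiff B).mp hB n
    ext i j
    have hij := h i j
    have hn : ((n : ℂ) + 1) ≠ 0 := by
      have : ((n : ℂ) + 1) = ((n + 1 : ℕ) : ℂ) := by push_cast; ring
      rw [this]
      exact_mod_cast Nat.succ_ne_zero n
    have hcm : (cM (n + 1) B) i j = (B i j).coeff (n + 1) := rfl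
    rw [hcm, Matrix.smul_apply, smul_eq_mul]
    field_simp
    linear_combination hij
  have hcf : ∀ B ∈ S, ∀ n : ℕ, cM n B = cc lam n • ((Tc a₁ a₂ a₃ a₄ ^ n) (cM 0 B)) := by
    intro B hB n
    induction n with
    | zero => simp [cc_zero]
    | succ n ih =>
      rw [hrec B hB n, ih, map_smul, smul_smul, ← cc_succ]
      congr 1
      rw [pow_succ', Module.End.mul_apply]
  let π : S →ₗ[ℂ] Matrix (Fin 2) (Fin 2) ℂ :=
    { toFun := fun B => cM 0 B.1
      map_add' := by
        intro x y
        ext i j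
        simp [cM, Matrix.add_apply, coeff_add]
      map_smul' := by
        intro c x
        ext i j
        simp [cM, Matrix.smul_apply, coeff_smul, smul_eq_mul] }
  have hker0 : ∀ B, B ∈ S → cM 0 B = 0 → B = 0 := by
    intro B hB h0
    ext i j n
    simp only [Matrix.zero_apply, coeff_zero]
    have hc := congrFun (congrFun (hcf B hB n) i) j
    rw [h0] at hc
    simpa [cM] using hc
  have hinj : Function.Injective π := by
    intro x y hxy
    apply Subtype.ext
    have hmem : (x : Matrix (Fin 2) (Fin 2) (Polynomial ℂ)) - y ∈ S := sub_mem x.2 y.2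
    have h0 : cM 0 ((x : Matrix (Fin 2) (Fin 2) (Polynomial ℂ)) - y) = 0 := by
      ext i j
      have := congrFun (congrFun hxy i) j
      simp only [cM, Matrix.of_apply, Matrix.sub_apply, coeff_sub, Matrix.zero_apply]
      rw [sub_eq_zero]
      exact this
    exact sub_eq_zero.mp (hker0 _ hmem h0)
  have h4 : Module.finrank ℂ (Matrix (Fin 2) (Fin 2) ℂ) = 4 := by
    rw [Module.finrank_matrix]
    simp
  have hrange : LinearMap.range π = LinearMap.ker ((Tc a₁ a₂ a₃ a₄) ^ 4) := by
    apply le_antisymm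
    · rintro X ⟨B, rfl⟩
      rw [LinearMap.mem_ker]
      have hcMN : ∀ N : ℕ, (∀ i j : Fin 2, (B.1 i j).natDegree < N) → cM N B.1 = 0 := by
        intro N hN
        ext i j
        simp only [cM, Matrix.of_apply, Matrix.zero_apply]
        exact coeff_eq_zero_of_natDegree_lt (hN i j)
      set N : ℕ := 5 + ((B.1 0 0).natDegree + (B.1 0 1).natDegree
        + (B.1 1 0).natDegree + (B.1 1 1).natDegree) with hN
      have hdeg : ∀ i j : Fin 2, (B.1 i j).natDegree < N := by
        intro i j
        rw [hN]
        fin_cases i <;> fin_cases j <;> simp [Fin.mk_zero, Fin.mk_one] <;> omega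
      have hc := hcf B.1 B.2 N
      rw [hcMN N hdeg] at hc
      have hTN : ((Tc a₁ a₂ a₃ a₄) ^ N) (cM 0 B.1) = 0 := by
        rcases smul_eq_zero.mp hc.symm with h | h
        · exact absurd h (cc_ne_zero lam hlam N)
        · exact h
      have e1 := Module.End.ker_pow_eq_ker_pow_finrank_of_le
        (f := Tc a₁ a₂ a₃ a₄) (m := N) (by rw [h4]; omega)
      have e2 := Module.End.ker_pow_eq_ker_pow_finrank_of_le
        (f := Tc a₁ a₂ a₃ a₄) (m := 4) h4.le
      have hk : LinearMap.ker ((Tc a₁ a₂ a₃ a₄) ^ N)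
          = LinearMap.ker ((Tc a₁ a₂ a₃ a₄) ^ 4) := e1.trans e2.symm
      have hmem : cM 0 B.1 ∈ LinearMap.ker ((Tc a₁ a₂ a₃ a₄) ^ N) :=
        LinearMap.mem_ker.mpr hTN
      rw [hk] at hmem
      exact LinearMap.mem_ker.mp hmem
    · intro X0 hX0
      have hX4 : ((Tc a₁ a₂ a₃ a₄) ^ 4) X0 = 0 := LinearMap.mem_ker.mp hX0
      set B : Matrix (Fin 2) (Fin 2) (Polynomial ℂ) :=
        Matrix.of fun i j =>
          ∑ k ∈ Finset.range 4,
            C (cc lam k * (((Tc a₁ a₂ a₃ a₄) ^ k) X0 i j)) * Polynomial.X ^ k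
          with hBdef
      have hcMB : ∀ n : ℕ,
          cM n B = if n < 4 then cc lam n • ((Tc a₁ a₂ a₃ a₄) ^ n) X0 else 0 := by
        intro n
        ext i j
        simp only [cM, Matrix.of_apply, hBdef]
        rw [finset_sum_coeff]
        simp only [coeff_C_mul, coeff_X_pow, mul_ite, mul_one, mul_zero]
        rw [Finset.sum_ite_eq (Finset.range 4) n
          (fun k => cc lam k * (((Tc a₁ a₂ a₃ a₄) ^ k) X0 i j))]
        by_cases hn : n < 4
        · simp [hn, Finset.mem_range, Matrix.smul_apply, smul_eq_mul]
        · simp [hn, Finset.mem_range]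
      have hBmem : B ∈ S := by
        rw [hiff]
        intro n i j
        have hco : (B i j).coeff (n + 1) = (cM (n + 1) B) i j := rfl
        rw [hco, hcMB, hcMB]
        by_cases h1 : n + 1 < 4
        · have h0 : n < 4 := by omega
          rw [if_pos h1, if_pos h0, map_smul]
          have hTT : Tc a₁ a₂ a₃ a₄ (((Tc a₁ a₂ a₃ a₄) ^ n) X0)
              = ((Tc a₁ a₂ a₃ a₄) ^ (n + 1)) X0 := by
            rw [pow_succ', Module.End.mul_apply]
          rw [hTT]
          simp only [Matrix.smul_apply, smul_eq_mul]
          linear_combination (((Tc a₁ a₂ a₃ a₄) ^ (n + 1)) X0 i j) * cc_rec lam hlam n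
        · by_cases h0 : n < 4
          · have hn3 : n = 3 := by omega
            subst hn3
            rw [if_neg h1, if_pos h0, map_smul]
            have hTT : Tc a₁ a₂ a₃ a₄ (((Tc a₁ a₂ a₃ a₄) ^ 3) X0)
                = ((Tc a₁ a₂ a₃ a₄) ^ 4) X0 := by
              conv_rhs => rw [pow_succ' (Tc a₁ a₂ a₃ a₄) 3]
              rfl
            rw [hTT, hX4]
            simp
          · rw [if_neg h1, if_neg h0]
            simp
      refine ⟨⟨B, hBmem⟩, ?_⟩
      show cM 0 B = X0
      rw [hcMB 0]
      simp [cc_zero]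
  have hfr : Module.finrank ℂ S
      = Module.finrank ℂ (LinearMap.ker ((Tc a₁ a₂ a₃ a₄) ^ 4)) := by
    rw [← hrange]
    exact (LinearMap.finrank_range_of_inj hinj).symm
  rw [hfr]
  constructor
  · intro hdim
    have htop : LinearMap.ker ((Tc a₁ a₂ a₃ a₄) ^ 4) = ⊤ := by
      apply Submodule.eq_top_of_finrank_eq
      rw [hdim, h4]
    exact (T4_iff a₁ a₂ a₃ a₄).mp (LinearMap.ker_eq_top.mp htop)
  · intro hΔ
    rw [(T4_iff a₁ a₂ a₃ a₄).mpr hΔ, LinearMap.ker_zero, finrank_top]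
    exact h4
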